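/- Let κ > 0 and let (q, ν) solve q' = −q² − κν, ν' = q(1−ν) with ν(t) < 1 on an interval. Define w = q/(1−ν) and v = 1/(1−ν). Then w' = κ(1−v) and v' = w; in particular the quantity w² + κ(1−v)² is constant in time. -/

import Mathlib

/-- The substitution `w = q/(1−ν)`, `v = 1/(1−ν)` linearizes the system:
`w' = κ(1−v)`, `v' = w`, and `w² + κ(1−v)²` is conserved. -/
theorem stmt_5 (κ : ℝ) (hκ : 0 < κ) (a b : ℝ) (q ν : ℝ → ℝ)
    (hq : ∀ t ∈ Set.Ioo a b, HasDerivAt q (-(q t)^2 - κ * ν t) t)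
    (hν : ∀ t ∈ Set.Ioo a b, HasDerivAt ν (q t * (1 - ν t)) t)
    (hν1 : ∀ t ∈ Set.Ioo a b, ν t < 1)
    (w v : ℝ → ℝ)
    (hw : ∀ t, w t = q t / (1 - ν t)) (hv : ∀ t, v t = 1 / (1 - ν t)) :
    (∀ t ∈ Set.Ioo a b, HasDerivAt w (κ * (1 - v t)) t ∧ HasDerivAt v (w t) t) ∧
    ∀ t₁ ∈ Set.Ioo a b, ∀ t₂ ∈ Set.Ioo a b,
      (w t₁)^2 + κ * (1 - v t₁)^2 = (w t₂)^2 + κ * (1 - v t₂)^2 := by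
  have key : ∀ t ∈ Set.Ioo a b, HasDerivAt w (κ * (1 - v t)) t ∧ HasDerivAt v (w t) t := by
    intro t ht
    have hne : (1 - ν t) ≠ 0 := by have := hν1 t ht; linarith
    have hden : HasDerivAt (fun s => 1 - ν s) (-(q t * (1 - ν t))) t := by
      exact ((hasDerivAt_const t (1:ℝ)).sub (hν t ht)).congr_deriv (by ring)
    have hwE : w = fun s => q s / (1 - ν s) := funext hw
    have hvE : v = fun s => 1 / (1 - ν s) := funext hv
    constructor
    · rw [hwE]
      have := (hq t ht).div hden hne
      refine this.congr_deriv ?_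
      rw [hv]
      field_simp
      ring
    · rw [hvE]
      have := (hasDerivAt_const t (1:ℝ)).div hden hne
      refine this.congr_deriv ?_
      rw [hw]
      field_simp
      ring
  refine ⟨key, ?_⟩
  intro t₁ ht₁ t₂ ht₂
  set E : ℝ → ℝ := fun t => (w t)^2 + κ * (1 - v t)^2 with hE
  have hE' : ∀ t ∈ Set.Ioo a b, HasDerivWithinAt E 0 (Set.Ioo a b) t := by
    intro t ht
    obtain ⟨hwd, hvd⟩ := key t ht
    have : HasDerivAt E (2 * w t * (κ * (1 - v t)) + κ * (2 * (1 - v t) * (0 - w t))) t := by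
      exact ((hwd.pow 2).add ((((hasDerivAt_const t (1:ℝ)).sub hvd).pow 2).const_mul κ)).congr_deriv
        (by simp only [Pi.sub_apply]; ring)
    have h0 : (2 * w t * (κ * (1 - v t)) + κ * (2 * (1 - v t) * (0 - w t))) = 0 := by ring
    exact (h0 ▸ this).hasDerivWithinAt
  have := (convex_Ioo a b).norm_image_sub_le_of_norm_hasDerivWithin_le
    (C := 0) (fun t ht => (hE' t ht).hasFDerivWithinAt)
    (fun t ht => by simp) ht₂ ht₁
  simp at this
  simpa [sub_eq_zero] using this
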